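/- Let N be a finitely generated torsion-free nilpotent group of nilpotency class c, H a finite-index subgroup of N, and φ : H → N a homomorphism. If the fixed point set Fix(φ) = {h ∈ H : φ(h) = h} is infinite, then there exists an i ∈ {1,…,c} and a non-identity element x of H_i N_{i+1}/N_{i+1} with φ_i(x) = x (equivalently, φ_i has eigenvalue 1). -/

import Mathlib

/-- Paper's `N_i = √[N]{γ_i(N)}` (1-indexed): the isolator in `N` of the `i`-th term of the
lower central series of `N`.  (Mathlib's `lowerCentralSeries N (i-1)` is the paper's `γ_i(N)`.) -/
def isolatorLCS (N : Type*) [Group N] (i : ℕ) : Set N :=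
  {x : N | ∃ m : ℕ, 1 ≤ m ∧ x ^ m ∈ (⊤ : Subgroup N).lowerCentralSeries (i - 1)}

/-- Paper's `H_i = √[H]{γ_i(H)}` for a subgroup `H ≤ N`, viewed as a subset of `N`. -/
def isolatorLCSSubgroup {N : Type*} [Group N] (H : Subgroup N) (i : ℕ) : Set N :=
  {x : N | ∃ hx : x ∈ H, ∃ m : ℕ, 1 ≤ m ∧ (⟨x, hx⟩ : H) ^ m ∈ (⊤ : Subgroup H).lowerCentralSeries (i - 1)}

open Subgroup
open scoped commutatorElement

universe u

private lemma lcs_le_map_of_surjective {G G' : Type*} [Group G] [Group G'] (f : G →* G')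
    (hf : Function.Surjective f) (n : ℕ) :
    (⊤ : Subgroup G').lowerCentralSeries n ≤ ((⊤ : Subgroup G).lowerCentralSeries n).map f := by
  induction n with
  | zero =>
      rw [Subgroup.lowerCentralSeries_zero, Subgroup.lowerCentralSeries_zero, Subgroup.map_top_of_surjective f hf]
  | succ n ih =>
      show ⁅(⊤ : Subgroup G').lowerCentralSeries n, (⊤ : Subgroup G')⁆ ≤ Subgroup.map f ⁅(⊤ : Subgroup G).lowerCentralSeries n, ⊤⁆
      rw [show Subgroup.map f ⁅(⊤ : Subgroup G).lowerCentralSeries n, ⊤⁆ = ⁅Subgroup.map f ((⊤ : Subgroup G).lowerCentralSeries n), Subgroup.map f ⊤⁆ from Subgroup.map_commutator _ _ f]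
      exact Subgroup.commutator_mono ih (by rw [Subgroup.map_top_of_surjective f hf])

/-- The subgroup of central torsion elements. -/
private def centerTorsion (G : Type*) [Group G] : Subgroup G where
  carrier := {x | x ∈ Subgroup.center G ∧ IsOfFinOrder x}
  one_mem' := ⟨Subgroup.one_mem _, IsOfFinOrder.one⟩
  mul_mem' := by
    rintro a b ⟨ha, hfa⟩ ⟨hb, hfb⟩
    refine ⟨mul_mem ha hb, ?_⟩
    have hcomm : Commute a b := (Subgroup.mem_center_iff.mp ha b).symm
    exact hcomm.isOfFinOrder_mul hfa hfb
  inv_mem' := fun h => ⟨inv_mem h.1, h.2.inv⟩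

/-- A nilpotent group generated by torsion elements is a torsion group. -/
private lemma torsion_aux (n : ℕ) : ∀ (G : Type u) [Group G],
    (⊤ : Subgroup G).lowerCentralSeries (n + 1) = ⊥ →
    ∀ S : Set G, (∀ s ∈ S, IsOfFinOrder s) → Subgroup.closure S = ⊤ →
    ∀ x : G, IsOfFinOrder x := by
  induction n with
  | zero =>
    intro G _ hbot S hS hStop x
    have hcomm : ∀ a b : G, Commute a b := by
      intro a b
      have h1 : ⁅a, b⁆ ∈ (⊤ : Subgroup G).lowerCentralSeries 1 := by
        show ⁅a, b⁆ ∈ ⁅(⊤ : Subgroup G).lowerCentralSeries 0, (⊤ : Subgroup G)⁆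
        exact commutator_mem_commutator (by rw [Subgroup.lowerCentralSeries_zero]; exact mem_top a)
          (mem_top b)
      rw [hbot, Subgroup.mem_bot] at h1
      exact commutatorElement_eq_one_iff_commute.mp h1
    have hx : x ∈ Subgroup.closure S := by rw [hStop]; exact mem_top x
    refine Subgroup.closure_induction (fun s hs => hS s hs) IsOfFinOrder.one
      (fun a b _ _ pa pb => (hcomm a b).isOfFinOrder_mul pa pb)
      (fun a _ pa => pa.inv) hx
  | succ n ih =>
    intro G _ hbot S hS hStop x
    -- the last nontrivial term of the lower central series is central
    have hcent : (⊤ : Subgroup G).lowerCentralSeries (n + 1) ≤ Subgroup.center G := by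
      intro d hd
      rw [Subgroup.mem_center_iff]
      intro g
      have h1 : ⁅d, g⁆ ∈ (⊤ : Subgroup G).lowerCentralSeries (n + 2) :=
        commutator_mem_commutator hd (mem_top g)
      rw [hbot, Subgroup.mem_bot] at h1
      exact (commutatorElement_eq_one_iff_commute.mp h1).eq.symm
    -- it consists of torsion elements
    have hDK : (⊤ : Subgroup G).lowerCentralSeries (n + 1) ≤ centerTorsion G := by
      show ⁅(⊤ : Subgroup G).lowerCentralSeries n, (⊤ : Subgroup G)⁆ ≤ centerTorsion G
      rw [Subgroup.commutator_def, Subgroup.closure_le]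
      rintro x ⟨a, ha, g, -, rfl⟩
      have hacent : ∀ h : G, ⁅a, h⁆ ∈ Subgroup.center G := fun h =>
        hcent (commutator_mem_commutator ha (mem_top h))
      let ψ : G →* G :=
        { toFun := fun h => ⁅a, h⁆
          map_one' := by simp
          map_mul' := fun h k => by
            show ⁅a, h * k⁆ = ⁅a, h⁆ * ⁅a, k⁆
            have hz := Subgroup.mem_center_iff.mp (hacent k)
            have e1 : ⁅a, h * k⁆ = ⁅a, h⁆ * (h * ⁅a, k⁆ * h⁻¹) := by
              simp only [commutatorElement_def]; group
            rw [e1, hz h, mul_assoc ⁅a, k⁆ h h⁻¹, mul_inv_cancel, mul_one] }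
      have hg : g ∈ Subgroup.closure S := by rw [hStop]; exact mem_top g
      have h2 : ψ g ∈ (Subgroup.closure S).map ψ := Subgroup.mem_map_of_mem ψ hg
      rw [MonoidHom.map_closure] at h2
      have hsub : Subgroup.closure (ψ '' S) ≤ centerTorsion G := by
        rw [Subgroup.closure_le]
        rintro _ ⟨s, hs, rfl⟩
        refine ⟨hacent s, ?_⟩
        obtain ⟨k, hk, hsk⟩ := (hS s hs).exists_pow_eq_one
        exact isOfFinOrder_iff_pow_eq_one.mpr ⟨k, hk, by rw [← map_pow, hsk, map_one]⟩
      exact hsub h2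
    -- pass to the quotient
    haveI : ((⊤ : Subgroup G).lowerCentralSeries (n + 1)).Normal := inferInstance
    set D := (⊤ : Subgroup G).lowerCentralSeries (n + 1) with hD
    have hQbot : (⊤ : Subgroup (G ⧸ D)).lowerCentralSeries (n + 1) = ⊥ := by
      rw [eq_bot_iff]
      refine le_trans (lcs_le_map_of_surjective (QuotientGroup.mk' D)
        QuotientGroup.mk_surjective (n + 1)) ?_
      rw [← hD, le_bot_iff, Subgroup.map_eq_bot_iff, QuotientGroup.ker_mk']
    have hQS : ∀ s ∈ (QuotientGroup.mk' D) '' S, IsOfFinOrder s := by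
      rintro _ ⟨s, hs, rfl⟩
      exact (QuotientGroup.mk' D).isOfFinOrder (hS s hs)
    have hQtop : Subgroup.closure ((QuotientGroup.mk' D) '' S) = ⊤ := by
      rw [← MonoidHom.map_closure, hStop, Subgroup.map_top_of_surjective _
        QuotientGroup.mk_surjective]
    have hq := ih (G ⧸ D) hQbot _ hQS hQtop ((QuotientGroup.mk' D) x)
    obtain ⟨k, hk, hk1⟩ := hq.exists_pow_eq_one
    have hxk : x ^ k ∈ D := by
      have : (QuotientGroup.mk' D) (x ^ k) = 1 := by rw [map_pow, hk1]
      rwa [QuotientGroup.mk'_apply, QuotientGroup.eq_one_iff] at this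
    have hfin : IsOfFinOrder (x ^ k) := (hDK hxk).2
    rcases isOfFinOrder_pow.mp hfin with h | h
    · exact h
    · omega
private lemma coe_finOrder {G : Type*} [Group G] {K : Subgroup G} {x : ↥K}
    (h : IsOfFinOrder (x : G)) : IsOfFinOrder x := by
  obtain ⟨k, hk, hk1⟩ := h.exists_pow_eq_one
  exact isOfFinOrder_iff_pow_eq_one.mpr ⟨k, hk, by
    ext; rw [SubgroupClass.coe_pow]; exact hk1⟩

/-- In a nilpotent group, the product of torsion elements is torsion. -/
private lemma torsion_mul {G : Type*} [Group G] [Group.IsNilpotent G] {a b : G}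
    (ha : IsOfFinOrder a) (hb : IsOfFinOrder b) : IsOfFinOrder (a * b) := by
  obtain ⟨n, hn⟩ := Subgroup.nilpotent_iff_lowerCentralSeries.mp ‹Group.IsNilpotent G›
  set K := Subgroup.closure ({a, b} : Set G) with hK
  have hKbot : (⊤ : Subgroup ↥K).lowerCentralSeries (n + 1) = ⊥ := by
    rw [eq_bot_iff]
    intro z hz
    rw [Subgroup.mem_bot]
    have h1 : (z : G) ∈ ((⊤ : Subgroup ↥K).lowerCentralSeries (n + 1)).map K.subtype :=
      Subgroup.mem_map_of_mem _ hz
    have h2 := Subgroup.lowerCentralSeries_map_subtype_le K (n + 1) h1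
    have h3 : (⊤ : Subgroup G).lowerCentralSeries (n + 1) ≤ ⊥ := by
      rw [← hn]; exact Subgroup.lowerCentralSeries_antitone ⊤ (Nat.le_succ n)
    have h4 := h3 h2
    rw [Subgroup.mem_bot] at h4
    exact Subtype.ext h4
  have hgen := Subgroup.closure_preimage_eq_top ({a, b} : Set G)
  have htor : ∀ s ∈ (K.subtype ⁻¹' {a, b}), IsOfFinOrder s := by
    rintro s hs
    rcases hs with h | h
    · exact coe_finOrder (by rw [show (s : G) = a from h]; exact ha)
    · exact coe_finOrder (by rw [show (s : G) = b from Set.mem_singleton_iff.mp h]; exact hb)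
  have hab : a * b ∈ K :=
    mul_mem (Subgroup.subset_closure (by simp)) (Subgroup.subset_closure (by simp))
  have hfin := torsion_aux n ↥K hKbot _ htor hgen ⟨a * b, hab⟩
  obtain ⟨k, hk, hk1⟩ := hfin.exists_pow_eq_one
  refine isOfFinOrder_iff_pow_eq_one.mpr ⟨k, hk, ?_⟩
  have := congrArg (K.subtype) hk1
  rwa [map_pow, map_one] at this

/-- The torsion subgroup of a nilpotent group. -/
private def torsionSG (Q : Type*) [Group Q] [Group.IsNilpotent Q] : Subgroup Q where
  carrier := {x | IsOfFinOrder x}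
  one_mem' := IsOfFinOrder.one
  mul_mem' := fun h1 h2 => torsion_mul h1 h2
  inv_mem' := fun h => h.inv

private lemma mem_torsionSG {Q : Type*} [Group Q] [Group.IsNilpotent Q] {x : Q} :
    x ∈ torsionSG Q ↔ IsOfFinOrder x := Iff.rfl

private instance torsionSG_normal {Q : Type*} [Group Q] [Group.IsNilpotent Q] :
    (torsionSG Q).Normal := by
  constructor
  intro x hx g
  have := ((MulAut.conj g).toMonoidHom : Q →* Q).isOfFinOrder (mem_torsionSG.mp hx)
  simpa [mem_torsionSG, MulAut.conj] using this

private lemma torsionfree_quotient (Q : Type*) [Group Q] [Group.IsNilpotent Q] :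
    ∀ g : Q ⧸ torsionSG Q, g ≠ 1 → ¬IsOfFinOrder g := by
  intro r hr hfin
  obtain ⟨q, rfl⟩ := QuotientGroup.mk_surjective r
  obtain ⟨k, hk, hk1⟩ := hfin.exists_pow_eq_one
  have hqk : (q ^ k : Q) ∈ torsionSG Q := by
    rw [← QuotientGroup.eq_one_iff]
    rw [show ((q ^ k : Q) : Q ⧸ torsionSG Q) = (q : Q ⧸ torsionSG Q) ^ k from rfl]
    exact hk1
  have hq : IsOfFinOrder q := by
    rcases isOfFinOrder_pow.mp (mem_torsionSG.mp hqk) with h | h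
    · exact h
    · omega
  exact hr ((QuotientGroup.eq_one_iff q).mpr hq)

/-- In a torsion-free nilpotent group, if `x ^ n` commutes with `y` then so does `x`. -/
private lemma commute_of_pow_commute {G : Type*} [Group G] [Group.IsNilpotent G]
    (htf : ∀ g : G, g ≠ 1 → ¬IsOfFinOrder g) {n : ℕ} (hn : 1 ≤ n) :
    ∀ x y : G, Commute (x ^ n) y → Commute x y := by
  obtain ⟨d, hd⟩ := Group.IsNilpotent.nilpotent G
  suffices h : ∀ (k : ℕ) (x y : G), y ∈ Subgroup.upperCentralSeries G k → Commute (x ^ n) y →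
      Commute x y by
    intro x y hc
    exact h d x y (by rw [hd]; exact Subgroup.mem_top y) hc
  intro k
  induction k with
  | zero =>
    intro x y hy _
    rw [Subgroup.upperCentralSeries_zero, Subgroup.mem_bot] at hy
    rw [hy]
    exact Commute.one_right x
  | succ k ih =>
    intro x y hy hc
    have hv : y⁻¹ * x * y * x⁻¹ ∈ Subgroup.upperCentralSeries G k := by
      have := Subgroup.mem_upperCentralSeries_succ_iff.mp (inv_mem hy) x
      simpa [commutatorElement_def] using this
    have hw : x⁻¹ * (y⁻¹ * x * y) ∈ Subgroup.upperCentralSeries G k := by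
      have hconj := (inferInstance : (Subgroup.upperCentralSeries G k).Normal).conj_mem _ hv x⁻¹
      have e : x⁻¹ * (y⁻¹ * x * y * x⁻¹) * x⁻¹⁻¹ = x⁻¹ * (y⁻¹ * x * y) := by group
      rwa [e] at hconj
    have h2 : y⁻¹ * x ^ n * y = x ^ n := by
      have e : y⁻¹ * x ^ n * y = y⁻¹ * (x ^ n * y) := by group
      rw [e, hc.eq]
      group
    have hxy : Commute (x ^ n) (y⁻¹ * x * y) := by
      have h1 : Commute (y⁻¹ * x ^ n * y⁻¹⁻¹) (y⁻¹ * x * y⁻¹⁻¹) :=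
        ((Commute.refl x).pow_left n).map ((MulAut.conj y⁻¹).toMonoidHom : G →* G)
      simp only [inv_inv] at h1
      rwa [h2] at h1
    have hxw : Commute (x ^ n) (x⁻¹ * (y⁻¹ * x * y)) :=
      Commute.mul_right ((Commute.refl x).pow_left n).inv_right hxy
    have hcw : Commute x (x⁻¹ * (y⁻¹ * x * y)) := ih x _ hw hxw
    have key : (y⁻¹ * x * y) ^ n = x ^ n * (x⁻¹ * (y⁻¹ * x * y)) ^ n := by
      rw [← hcw.mul_pow]
      congr 1
      group
    have key2 : (y⁻¹ * x * y) ^ n = x ^ n := by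
      have e : (y⁻¹ * x * y⁻¹⁻¹) ^ n = y⁻¹ * x ^ n * y⁻¹⁻¹ := conj_pow
      simp only [inv_inv] at e
      rw [e, h2]
    have hwn : (x⁻¹ * (y⁻¹ * x * y)) ^ n = 1 := by
      have := key.symm.trans key2
      calc (x⁻¹ * (y⁻¹ * x * y)) ^ n
          = (x ^ n)⁻¹ * (x ^ n * (x⁻¹ * (y⁻¹ * x * y)) ^ n) := by group
        _ = (x ^ n)⁻¹ * x ^ n := by rw [this]
        _ = 1 := by group
    have hw1 : x⁻¹ * (y⁻¹ * x * y) = 1 := by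
      by_contra hne
      exact htf _ hne (isOfFinOrder_iff_pow_eq_one.mpr ⟨n, hn, hwn⟩)
    have hfix : y⁻¹ * x * y = x := by
      have : x * (x⁻¹ * (y⁻¹ * x * y)) = x * 1 := by rw [hw1]
      calc y⁻¹ * x * y = x * (x⁻¹ * (y⁻¹ * x * y)) := by group
        _ = x * 1 := this
        _ = x := mul_one x
    show x * y = y * x
    calc x * y = y * (y⁻¹ * x * y) := by group
      _ = y * x := by rw [hfix]
/-- Conjugation by `g` as an automorphism of a normal subgroup. -/
private def conjHom {N : Type*} [Group N] (M : Subgroup N) [hM : M.Normal] (g : N) :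
    ↥M →* ↥M where
  toFun m := ⟨g * ↑m * g⁻¹, hM.conj_mem _ m.2 g⟩
  map_one' := by ext; simp
  map_mul' a b := by
    ext
    show g * ↑(a * b) * g⁻¹ = (g * ↑a * g⁻¹) * (g * ↑b * g⁻¹)
    rw [Subgroup.coe_mul]
    group

/-- Key lemma: if `M` is a finite-index normal subgroup of a nilpotent group `N`, then every
element of `γ_j(N)` has a positive power lying in `γ_j(M)`. -/
private lemma main_lemma {N : Type*} [Group N] [Group.IsNilpotent N]
    (M : Subgroup N) [M.Normal] [M.FiniteIndex] (j : ℕ) :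
    ∀ y ∈ (⊤ : Subgroup N).lowerCentralSeries j,
      ∃ m : ℕ, 1 ≤ m ∧ y ^ m ∈ ((⊤ : Subgroup ↥M).lowerCentralSeries j).map M.subtype := by
  induction j with
  | zero =>
    intro y _
    refine ⟨M.index, Nat.one_le_iff_ne_zero.mpr Subgroup.FiniteIndex.index_ne_zero, ?_⟩
    rw [Subgroup.lowerCentralSeries_zero, ← MonoidHom.range_eq_map, Subgroup.range_subtype]
    exact M.pow_index_mem y
  | succ j ih =>
    haveI hPn : (((⊤ : Subgroup ↥M).lowerCentralSeries (j + 1)).map M.subtype).Normal := by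
      constructor
      rintro p hp g
      obtain ⟨p', hp', rfl⟩ := hp
      exact ⟨conjHom M g p', Subgroup.lowerCentralSeries.map (conjHom M g) (j + 1)
        (Subgroup.mem_map_of_mem _ hp'), rfl⟩
    set P := ((⊤ : Subgroup ↥M).lowerCentralSeries (j + 1)).map M.subtype with hPdef
    let π : N →* (N ⧸ P) ⧸ torsionSG (N ⧸ P) :=
      (QuotientGroup.mk' (torsionSG (N ⧸ P))).comp (QuotientGroup.mk' P)
    have hPker : P ≤ π.ker := by
      intro x hx
      rw [MonoidHom.mem_ker]
      show (QuotientGroup.mk' (torsionSG (N ⧸ P))) ((QuotientGroup.mk' P) x) = 1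
      have h1 : (QuotientGroup.mk' P) x = 1 := by
        rw [QuotientGroup.mk'_apply, QuotientGroup.eq_one_iff]
        exact hx
      rw [h1, map_one]
    have htfR := torsionfree_quotient (N ⧸ P)
    have hMidx : 1 ≤ M.index := Nat.one_le_iff_ne_zero.mpr Subgroup.FiniteIndex.index_ne_zero
    have hker : (⊤ : Subgroup N).lowerCentralSeries (j + 1) ≤ π.ker := by
      show ⁅(⊤ : Subgroup N).lowerCentralSeries j, (⊤ : Subgroup N)⁆ ≤ π.ker
      rw [Subgroup.commutator_le]
      intro p hp q _
      rw [MonoidHom.mem_ker, map_commutatorElement, commutatorElement_eq_one_iff_commute]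
      obtain ⟨mp, hmp1, hmp⟩ := ih p hp
      have hq : q ^ M.index ∈ M := M.pow_index_mem q
      obtain ⟨p1, hp1, hp1e⟩ := hmp
      have hcin : ⁅p ^ mp, q ^ M.index⁆ ∈ P := by
        rw [← hp1e]
        refine ⟨⁅p1, ⟨q ^ M.index, hq⟩⁆,
          commutator_mem_commutator hp1 (Subgroup.mem_top _), ?_⟩
        rw [map_commutatorElement]
        rfl
      have hcpow : Commute (π p ^ mp) (π q ^ M.index) := by
        rw [← map_pow, ← map_pow, ← commutatorElement_eq_one_iff_commute,
          ← map_commutatorElement]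
        exact MonoidHom.mem_ker.mp (hPker hcin)
      have h1 : Commute (π p) (π q ^ M.index) :=
        commute_of_pow_commute htfR hmp1 (π p) (π q ^ M.index) hcpow
      have h2 : Commute (π q) (π p) :=
        commute_of_pow_commute htfR hMidx (π q) (π p) h1.symm
      exact h2.symm
    intro y hy
    have hy1 : π y = 1 := MonoidHom.mem_ker.mp (hker hy)
    have hyT : ((QuotientGroup.mk' P) y) ∈ torsionSG (N ⧸ P) := by
      rw [← QuotientGroup.eq_one_iff ((QuotientGroup.mk' P) y)]
      exact hy1
    obtain ⟨k, hk, hk1⟩ := (mem_torsionSG.mp hyT).exists_pow_eq_one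
    refine ⟨k, hk, ?_⟩
    have h2 : (QuotientGroup.mk' P) (y ^ k) = 1 := by rw [map_pow, hk1]
    rw [QuotientGroup.mk'_apply, QuotientGroup.eq_one_iff] at h2
    exact h2

/-- Version for an arbitrary finite-index subgroup. -/
private lemma main_H {N : Type*} [Group N] [Group.IsNilpotent N]
    (H : Subgroup N) [H.FiniteIndex] (j : ℕ) {y : N} (hy : y ∈ (⊤ : Subgroup N).lowerCentralSeries j) :
    ∃ m : ℕ, 1 ≤ m ∧ y ^ m ∈ ((⊤ : Subgroup ↥H).lowerCentralSeries j).map H.subtype := by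
  obtain ⟨m, hm, hmem⟩ := main_lemma H.normalCore j y hy
  refine ⟨m, hm, ?_⟩
  obtain ⟨z, hz, hze⟩ := hmem
  refine ⟨Subgroup.inclusion H.normalCore_le z,
    Subgroup.lowerCentralSeries.map (Subgroup.inclusion H.normalCore_le) j
      (Subgroup.mem_map_of_mem _ hz), ?_⟩
  rw [← hze]
  rfl

/-- Lemma 4.7 of the paper.
Let `N` be a finitely generated torsion-free nilpotent group of class `c`, `H ≤_f N` and
`φ : H → N` a homomorphism, with induced homomorphisms
`φ_i : H_i N_{i+1}/N_{i+1} → N_i/N_{i+1}`.  If `Fix(φ) = {h ∈ H : φ(h) = h}` is infinite,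
then for some `i ∈ {1,…,c}` the morphism `φ_i` has a non-identity fixed point
(i.e. `φ_i` has eigenvalue `1`). -/
theorem eigenvalue_one_of_infinite_fixed_points
    {N : Type*} [Group N] [Group.IsNilpotent N]
    (hfg : Group.FG N) (htf : ∀ g : N, g ≠ 1 → ¬IsOfFinOrder g)
    (c : ℕ) (hc : Group.nilpotencyClass N = c)
    (H : Subgroup N) [H.FiniteIndex] (φ : H →* N)
    (Ni Hi : ℕ → Subgroup N)
    (hNi : ∀ j, (Ni j : Set N) = isolatorLCS N j)
    (hHi : ∀ j, (Hi j : Set N) = isolatorLCSSubgroup H j)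
    [∀ j, (Ni j).Normal]
    (φi : ∀ j, ↥((Hi j).map (QuotientGroup.mk' (Ni (j + 1)))) →*
        ↥((Ni j).map (QuotientGroup.mk' (Ni (j + 1)))))
    (hφi : ∀ (j : ℕ) (h : H) (hh : (h : N) ∈ Hi j),
      ((φi j ⟨QuotientGroup.mk' (Ni (j + 1)) (h : N),
          Subgroup.mem_map.mpr ⟨(h : N), hh, rfl⟩⟩ :
        ↥((Ni j).map (QuotientGroup.mk' (Ni (j + 1))))) : N ⧸ Ni (j + 1))
        = QuotientGroup.mk' (Ni (j + 1)) (φ h))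
    (hFixInf : {h : H | φ h = (h : N)}.Infinite) :
    ∃ i, 1 ≤ i ∧ i ≤ c ∧
      ∃ x : ↥((Hi i).map (QuotientGroup.mk' (Ni (i + 1)))), x ≠ 1 ∧
        ((φi i x : ↥((Ni i).map (QuotientGroup.mk' (Ni (i + 1))))) : N ⧸ Ni (i + 1))
          = (x : N ⧸ Ni (i + 1)) := by
  classical
  -- find a nontrivial fixed point
  obtain ⟨g₁, hg₁, g₂, hg₂, hne⟩ := hFixInf.nontrivial
  have hg₁' : φ g₁ = (g₁ : N) := hg₁
  have hg₂' : φ g₂ = (g₂ : N) := hg₂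
  set g : ↥H := g₁ * g₂⁻¹ with hgdef
  have hgfix : φ g = (g : N) := by
    rw [hgdef, map_mul, map_inv, hg₁', hg₂']
    simp
  have hgne : (g : N) ≠ 1 := by
    intro h
    apply hne
    have h1 : g = 1 := by
      apply Subtype.ext
      simpa using h
    rw [hgdef] at h1
    exact mul_inv_eq_one.mp h1
  -- c ≥ 1
  have hc1 : 1 ≤ c := by
    by_contra h
    have hc0 : Group.nilpotencyClass N = 0 := by omega
    haveI := nilpotencyClass_zero_iff_subsingleton.mp hc0
    exact hgne (Subsingleton.elim _ _)
  -- membership criteria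
  have memNi : ∀ (j : ℕ) (x : N), x ∈ Ni j ↔
      ∃ m : ℕ, 1 ≤ m ∧ x ^ m ∈ (⊤ : Subgroup N).lowerCentralSeries (j - 1) := by
    intro j x
    have := Set.ext_iff.mp (hNi j) x
    simpa [isolatorLCS] using this
  have memHi : ∀ (j : ℕ) (x : N), x ∈ Hi j ↔
      ∃ hx : x ∈ H, ∃ m : ℕ, 1 ≤ m ∧
        (⟨x, hx⟩ : ↥H) ^ m ∈ (⊤ : Subgroup ↥H).lowerCentralSeries (j - 1) := by
    intro j x
    have := Set.ext_iff.mp (hHi j) x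
    simpa [isolatorLCSSubgroup] using this
  -- the level of g
  have hP1 : (g : N) ∈ Hi 1 := by
    refine (memHi 1 _).mpr ⟨g.2, 1, le_refl 1, ?_⟩
    have e : (1 : ℕ) - 1 = 0 := rfl
    rw [e, Subgroup.lowerCentralSeries_zero]
    exact Subgroup.mem_top _
  have hPc1 : (g : N) ∉ Hi (c + 1) := by
    intro hmem
    obtain ⟨hx, m, hm, hpow⟩ := (memHi (c + 1) _).mp hmem
    have h1 : (((⟨(g : N), hx⟩ : ↥H) ^ m : ↥H) : N) ∈
        ((⊤ : Subgroup ↥H).lowerCentralSeries (c + 1 - 1)).map H.subtype :=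
      Subgroup.mem_map_of_mem _ hpow
    have h2 := Subgroup.lowerCentralSeries_map_subtype_le H (c + 1 - 1) h1
    rw [Nat.add_sub_cancel, ← hc, Subgroup.lowerCentralSeries_nilpotencyClass, Subgroup.mem_bot] at h2
    have h3 : (g : N) ^ m = 1 := by
      rw [← h2, SubgroupClass.coe_pow]
    exact htf _ hgne (isOfFinOrder_iff_pow_eq_one.mpr ⟨m, hm, h3⟩)
  set i := Nat.findGreatest (fun j => (g : N) ∈ Hi j) c with hidef
  have hi1 : 1 ≤ i := Nat.le_findGreatest (P := fun j => (g : N) ∈ Hi j) hc1 hP1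
  have hic : i ≤ c := Nat.findGreatest_le c
  have hPi : (g : N) ∈ Hi i := by
    have := Nat.findGreatest_spec (P := fun j => (g : N) ∈ Hi j) hc1 hP1
    simpa using this
  have hPisucc : (g : N) ∉ Hi (i + 1) := by
    intro hmem
    rcases Nat.lt_or_ge i c with hlt | hge
    · have := Nat.le_findGreatest (P := fun j => (g : N) ∈ Hi j) (Nat.succ_le_of_lt hlt) hmem
      omega
    · have hie : i = c := le_antisymm hic hge
      rw [hie] at hmem
      exact hPc1 hmem
  have hNisucc : (g : N) ∉ Ni (i + 1) := by
    intro hmem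
    obtain ⟨m, hm, hpow⟩ := (memNi (i + 1) _).mp hmem
    rw [Nat.add_sub_cancel] at hpow
    obtain ⟨k, hk, hk1⟩ := main_H H i hpow
    apply hPisucc
    refine (memHi (i + 1) _).mpr ⟨g.2, m * k, Nat.mul_pos hm hk, ?_⟩
    rw [Nat.add_sub_cancel]
    obtain ⟨z, hz, hze⟩ := hk1
    have hzz : z = (⟨(g : N), g.2⟩ : ↥H) ^ (m * k) := by
      apply Subtype.ext
      rw [SubgroupClass.coe_pow]
      show (z : N) = (g : N) ^ (m * k)
      rw [pow_mul]
      exact hze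
    rw [← hzz]
    exact hz
  -- construct the fixed point in the quotient
  refine ⟨i, hi1, hic,
    ⟨QuotientGroup.mk' (Ni (i + 1)) ((g : N)),
      Subgroup.mem_map.mpr ⟨(g : N), hPi, rfl⟩⟩, ?_, ?_⟩
  · intro hone
    apply hNisucc
    have h1 : (QuotientGroup.mk' (Ni (i + 1))) (g : N) = 1 := congrArg Subtype.val hone
    rw [QuotientGroup.mk'_apply, QuotientGroup.eq_one_iff] at h1
    exact h1
  · have := hφi i g hPi
    rw [hgfix] at this
    exact this
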